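/- Let Π be a set of permutation patterns with k = max_{π∈Π}|π|, and let τ ∈ S_n with n > k. Then τ ∈ S_n(Π) if and only if τ↓_i ∈ S_{n−1}(Π) for every i ∈ {1,…,k+1}. -/

import Mathlib

/-- `w` is a permutation of `{1,…,n}`, viewed as a word containing each of `1,…,n` exactly once. -/
def IsPermWord (n : ℕ) (w : List ℕ) : Prop := w.Perm (List.range' 1 n)

/-- The standardization of a word `w` of distinct letters: each letter is replaced by its rank. -/
def stdize (w : List ℕ) : List ℕ := w.map fun x => (w.filter fun y => decide (y ≤ x)).length

/-- `τ` avoids the set of patterns `P`: no nonempty subsequence of `τ` standardizes to a pattern. -/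
def AvoidsSet (P : Set (List ℕ)) (τ : List ℕ) : Prop :=
  ∀ u : List ℕ, u.Sublist τ → u ≠ [] → stdize u ∉ P
/-- `τ↓_i` for `τ ∈ S_n`: delete the `i`-th largest letter `n - i + 1` and standardize. -/
def delOp (n i : ℕ) (τ : List ℕ) : List ℕ := stdize (τ.erase (n - i + 1))

namespace StmtAux

def rnk (l : List ℕ) (x : ℕ) : ℕ := (l.filter fun y => decide (y ≤ x)).length

lemma stdize_eq_map (w : List ℕ) : stdize w = w.map (rnk w) := rfl

lemma rnk_cons (a : ℕ) (t : List ℕ) (x : ℕ) :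
    rnk (a :: t) x = (if a ≤ x then 1 else 0) + rnk t x := by
  simp only [rnk, List.filter_cons]
  split <;> rename_i h <;> simp_all <;> omega

lemma rnk_mono (l : List ℕ) {x y : ℕ} (h : x ≤ y) : rnk l x ≤ rnk l y := by
  induction l with
  | nil => simp [rnk]
  | cons a t ih =>
    rw [rnk_cons, rnk_cons]
    have : a ≤ x → a ≤ y := fun h' => h'.trans h
    split <;> split <;> omega

lemma rnk_strict (l : List ℕ) {x y : ℕ} (hx : x ∈ l) (h : y < x) :
    rnk l y < rnk l x := by
  induction l with
  | nil => simp at hx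
  | cons a t ih =>
    rw [rnk_cons, rnk_cons]
    rcases List.mem_cons.1 hx with rfl | hx
    · have hle : rnk t y ≤ rnk t x := rnk_mono t h.le
      have : ¬ x ≤ y := not_le.2 h
      simp [this]; omega
    · have := ih hx
      have : a ≤ y → a ≤ x := fun h' => h'.trans h.le
      split <;> split <;> omega

lemma rnk_le_iff (l : List ℕ) {x y : ℕ} (hx : x ∈ l) (hy : y ∈ l) :
    x ≤ y ↔ rnk l x ≤ rnk l y := by
  constructor
  · exact rnk_mono l
  · intro h
    by_contra hxy
    exact absurd h (not_le.2 (rnk_strict l hx (not_le.1 hxy)))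

lemma stdize_map (u : List ℕ) (f : ℕ → ℕ)
    (hf : ∀ x ∈ u, ∀ y ∈ u, (y ≤ x ↔ f y ≤ f x)) :
    stdize (u.map f) = stdize u := by
  unfold stdize
  rw [List.map_map]
  apply List.map_congr_left
  intro x hx
  simp only [Function.comp_apply]
  rw [List.filter_map, List.length_map]
  congr 1
  apply List.filter_congr
  intro y hy
  simp only [Function.comp_apply, decide_eq_decide]
  exact (hf x hx y hy).symm

lemma rnk_perm {w v : List ℕ} (h : w.Perm v) : rnk w = rnk v := by
  funext x
  exact (h.filter _).length_eq

lemma stdize_perm {w v : List ℕ} (h : w.Perm v) : (stdize w).Perm (stdize v) := by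
  rw [stdize_eq_map, stdize_eq_map, rnk_perm h]
  exact h.map _

lemma map_rnk_sorted : ∀ s : List ℕ, s.Pairwise (· < ·) →
    s.map (rnk s) = List.range' 1 s.length
  | [], _ => rfl
  | a :: t, h => by
    have ha : ∀ b ∈ t, a < b := fun b hb => (List.pairwise_cons.1 h).1 b hb
    have ht : t.Pairwise (· < ·) := (List.pairwise_cons.1 h).2
    have h1 : rnk (a :: t) a = 1 := by
      rw [rnk_cons]
      have : rnk t a = 0 := by
        simp only [rnk, List.length_eq_zero_iff, List.filter_eq_nil_iff]
        intro b hb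
        simpa using not_le.2 (ha b hb)
      simp [this]
    have h2 : ∀ x ∈ t, rnk (a :: t) x = rnk t x + 1 := by
      intro x hx
      rw [rnk_cons]
      simp [(ha x hx).le]; omega
    rw [List.map_cons, h1, List.map_congr_left h2]
    have : t.map (fun x => rnk t x + 1) = (t.map (rnk t)).map (fun x => 1 + x) := by
      rw [List.map_map]; apply List.map_congr_left; intro x _; simp [Nat.add_comm]
    rw [this, map_rnk_sorted t ht, List.map_add_range']
    simp [List.length_cons, List.range'_succ]

lemma stdize_perm_range {w : List ℕ} (hw : w.Nodup) :
    (stdize w).Perm (List.range' 1 w.length) := by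
  set s := w.mergeSort (fun a b => decide (a ≤ b)) with hs
  have hperm : s.Perm w := List.mergeSort_perm w _
  have hsorted : List.Pairwise (· ≤ ·) s := by
    have := List.pairwise_mergeSort (le := fun a b : ℕ => decide (a ≤ b))
      (fun a b c => by simp; omega) (fun a b => by simp; omega) w
    simpa using this
  have hnd : s.Nodup := hperm.nodup_iff.2 hw
  have hlt : s.Pairwise (· < ·) := (hsorted.and hnd).imp fun h => lt_of_le_of_ne h.1 h.2
  have := map_rnk_sorted s hlt
  calc (stdize w).Perm (stdize s) := stdize_perm hperm.symm
    _ = List.range' 1 s.length := this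
    _ = List.range' 1 w.length := by rw [hperm.length_eq]

end StmtAux
open StmtAux in
theorem statement1 (P : Set (List ℕ)) (k : ℕ)
    (hP : ∀ π ∈ P, IsPermWord π.length π ∧ 1 ≤ π.length ∧ π.length ≤ k)
    (hk : ∃ π ∈ P, π.length = k)
    (n : ℕ) (hn : k < n) (τ : List ℕ) (hτ : IsPermWord n τ) :
    AvoidsSet P τ ↔
      ∀ i, 1 ≤ i → i ≤ k + 1 →
        IsPermWord (n - 1) (delOp n i τ) ∧ AvoidsSet P (delOp n i τ) := by
  have hτnd : τ.Nodup := hτ.nodup_iff.2 (List.nodup_range' (s := 1) (n := n))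
  have hτlen : τ.length = n := by
    have := hτ.length_eq; simpa using this
  -- facts about m = n - i + 1 for 1 ≤ i ≤ k+1
  have hmem : ∀ i, 1 ≤ i → i ≤ k + 1 → (n - i + 1) ∈ τ := by
    intro i h1 h2
    rw [hτ.mem_iff, List.mem_range'_1]
    omega
  have hPermDel : ∀ i, 1 ≤ i → i ≤ k + 1 → IsPermWord (n - 1) (delOp n i τ) := by
    intro i h1 h2
    have hm := hmem i h1 h2
    have hnd : (τ.erase (n - i + 1)).Nodup := hτnd.erase _
    have hl : (τ.erase (n - i + 1)).length = n - 1 := by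
      rw [List.length_erase_of_mem hm, hτlen]
    unfold delOp IsPermWord
    rw [← hl]
    exact stdize_perm_range hnd
  constructor
  · intro hav i h1 h2
    refine ⟨hPermDel i h1 h2, ?_⟩
    intro u hu hune
    set e := τ.erase (n - i + 1) with he
    have hdel : delOp n i τ = e.map (rnk e) := rfl
    rw [hdel] at hu
    obtain ⟨u', hu', rfl⟩ := List.sublist_map_iff.1 hu
    have hsub : u' ⊆ e := hu'.subset
    have : stdize (u'.map (rnk e)) = stdize u' := by
      apply stdize_map
      intro x hx y hy
      exact rnk_le_iff e (hsub hy) (hsub hx)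
    rw [this]
    apply hav u' (hu'.trans List.erase_sublist)
    intro hnil; subst hnil; simp at hune
  · intro h u hu hune hmemP
    have hulen : u.length ≤ k := by
      have := (hP _ hmemP).2.2
      simpa [stdize] using this
    have hund : u.Nodup := (hu.nodup hτnd)
    -- find i in [1, k+1] with n - i + 1 ∉ u
    have : ∃ i, 1 ≤ i ∧ i ≤ k + 1 ∧ (n - i + 1) ∉ u := by
      by_contra hcon
      push_neg at hcon
      set L := (List.range' 1 (k+1)).map (fun i => n - i + 1) with hL
      have hLnd : L.Nodup := by
        apply List.Nodup.map_on _ (List.nodup_range' (s := 1) (n := k+1))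
        intro x hx y hy hxy
        rw [List.mem_range'_1] at hx hy
        omega
      have hLsub : L ⊆ u := by
        intro x hx
        rw [hL, List.mem_map] at hx
        obtain ⟨i, hi, rfl⟩ := hx
        rw [List.mem_range'_1] at hi
        exact hcon i hi.1 (by omega)
      have := (hLnd.subperm hLsub).length_le
      simp [hL] at this
      omega
    obtain ⟨i, h1, h2, hni⟩ := this
    set e := τ.erase (n - i + 1) with he
    have hue : u.Sublist e := by
      rw [he, hτnd.erase_eq_filter]
      have : u.filter (fun x => x != (n - i + 1)) = u := by
        apply List.filter_eq_self.2
        intro a ha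
        simp only [bne_iff_ne, ne_eq]
        intro hq; subst hq; exact hni ha
      rw [← this]
      exact hu.filter _
    have hsub : u ⊆ e := hue.subset
    have hstd : stdize (u.map (rnk e)) = stdize u := by
      apply stdize_map
      intro x hx y hy
      exact rnk_le_iff e (hsub hy) (hsub hx)
    have hmap : (u.map (rnk e)).Sublist (delOp n i τ) := by
      have : delOp n i τ = e.map (rnk e) := rfl
      rw [this]
      exact hue.map _
    have := (h i h1 h2).2 (u.map (rnk e)) hmap (by simpa using hune)
    rw [hstd] at this
    exact this hmemP
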